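/- Let h be a hyperexponential term given in standard form h = c0·exp(a/b)·∏_{ℓ=1}^L c_ℓ^{e_ℓ} with deg_x a > deg_x b, and let r ≥ i ≥ 0 be integers. Then there exists a polynomial N_{r,i} ∈ K[x,y] with (D_x^i h)·c0·(b·b*·∏_{ℓ=1}^L c_ℓ)^r = N_{r,i}·h in E, satisfying deg_x N_{r,i} = deg_x c0 + r·α + i·β, deg_y N_{r,i} ≤ deg_y c0 + r·γ, and lc_x N_{r,i} = (lc_x c0)·(lc_x a)^i·(lc_x b)^{r−i}·(lc_x b*)^r·(lc_x(∏_{ℓ=1}^L c_ℓ))^r·(deg_x a − deg_x b)^i, where the integer deg_x a − deg_x b is interpreted as an element of K. -/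
import Mathlib

open Polynomial Finset

/-- The derivative with respect to `y` on `K[y][x]`
(we represent bivariate polynomials as `Polynomial (Polynomial K)`,
the *outer* variable being `x`, the *inner* variable being `y`). -/
noncomputable def DY {K : Type*} [CommRing K] (p : Polynomial (Polynomial K)) :
    Polynomial (Polynomial K) :=
  p.sum fun n a => Polynomial.C (Polynomial.derivative a) * Polynomial.X ^ n

/-- The degree with respect to `y` of an element of `K[y][x]`. -/
noncomputable def degY {K : Type*} [CommRing K] (p : Polynomial (Polynomial K)) : ℕ :=
  p.support.sup fun n => (p.coeff n).natDegree

/-- The embedding of `K[x]` into `K[y][x]` (polynomials free of `y`). -/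
noncomputable def liftX {K : Type*} [CommRing K] (p : Polynomial K) :
    Polynomial (Polynomial K) :=
  p.map (Polynomial.C : K →+* Polynomial K)

/-- The falling factorial `z(z-1)⋯(z-n+1)` of an element of `K`. -/
noncomputable def ffall {K : Type*} [Field K] (z : K) (n : ℕ) : K :=
  ∏ j ∈ Finset.range n, (z - (j : K))

namespace Lemma8Aux

variable {K : Type*} [CommRing K]

theorem degY_zero : degY (0 : Polynomial (Polynomial K)) = 0 := by simp [degY]

theorem degY_le {p : Polynomial (Polynomial K)} {m : ℕ}
    (H : ∀ n, (p.coeff n).natDegree ≤ m) : degY p ≤ m :=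
  Finset.sup_le fun n _ => H n

theorem degY_coeff_le (p : Polynomial (Polynomial K)) (n : ℕ) :
    (p.coeff n).natDegree ≤ degY p := by
  by_cases h : p.coeff n = 0
  · rw [h, Polynomial.natDegree_zero]
    exact Nat.zero_le _
  · exact Finset.le_sup (f := fun m => (p.coeff m).natDegree) (Polynomial.mem_support_iff.mpr h)

theorem le_degY {p : Polynomial (Polynomial K)} {n d : ℕ}
    (h : (p.coeff n).coeff d ≠ 0) : d ≤ degY p :=
  (Polynomial.le_natDegree_of_ne_zero h).trans (degY_coeff_le p n)

theorem degY_add_le (p q : Polynomial (Polynomial K)) :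
    degY (p + q) ≤ max (degY p) (degY q) := by
  apply degY_le
  intro n
  rw [Polynomial.coeff_add]
  exact (Polynomial.natDegree_add_le _ _).trans
    (max_le_max (degY_coeff_le p n) (degY_coeff_le q n))

theorem degY_sub_le (p q : Polynomial (Polynomial K)) :
    degY (p - q) ≤ max (degY p) (degY q) := by
  apply degY_le
  intro n
  rw [Polynomial.coeff_sub]
  exact (Polynomial.natDegree_sub_le _ _).trans
    (max_le_max (degY_coeff_le p n) (degY_coeff_le q n))

theorem degY_mul_le (p q : Polynomial (Polynomial K)) :
    degY (p * q) ≤ degY p + degY q := by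
  apply degY_le
  intro n
  rw [Polynomial.coeff_mul]
  apply Polynomial.natDegree_sum_le_of_forall_le
  intro x _
  exact (Polynomial.natDegree_mul_le).trans
    (add_le_add (degY_coeff_le p x.1) (degY_coeff_le q x.2))

theorem degY_C (q : Polynomial K) :
    degY (Polynomial.C q : Polynomial (Polynomial K)) = q.natDegree := by
  by_cases h : q = 0
  · simp [h, degY_zero]
  · rw [degY, Polynomial.support_C h, Finset.sup_singleton, Polynomial.coeff_C_zero]

theorem degY_natCast (n : ℕ) : degY ((n : ℕ) : Polynomial (Polynomial K)) = 0 := by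
  rw [← Polynomial.C_eq_natCast, degY_C, Polynomial.natDegree_natCast]

theorem degY_one : degY (1 : Polynomial (Polynomial K)) = 0 := by
  simpa using degY_natCast (K := K) 1

theorem degY_derivative_le (p : Polynomial (Polynomial K)) :
    degY (Polynomial.derivative p) ≤ degY p := by
  apply degY_le
  intro n
  rw [Polynomial.coeff_derivative]
  refine (Polynomial.natDegree_mul_le).trans ?_
  have h2 : ((n : Polynomial K) + 1).natDegree = 0 := by
    have : ((n : Polynomial K) + 1) = ((n + 1 : ℕ) : Polynomial K) := by push_cast; ring
    rw [this, Polynomial.natDegree_natCast]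
  rw [h2]
  simpa using degY_coeff_le p (n + 1)

theorem degY_smul_le (k : K) (p : Polynomial (Polynomial K)) :
    degY (k • p) ≤ degY p := by
  apply degY_le
  intro n
  rw [Polynomial.coeff_smul]
  exact (Polynomial.natDegree_smul_le _ _).trans (degY_coeff_le p n)

theorem degY_sum_le {ι : Type*} (t : Finset ι) (f : ι → Polynomial (Polynomial K)) {m : ℕ}
    (H : ∀ i ∈ t, degY (f i) ≤ m) : degY (∑ i ∈ t, f i) ≤ m := by
  classical
  induction t using Finset.induction_on with
  | empty => simp [degY_zero]
  | @insert a t' hni ih =>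
    rw [Finset.sum_insert hni]
    exact (degY_add_le _ _).trans (max_le (H a (Finset.mem_insert_self a t'))
      (ih fun i hi => H i (Finset.mem_insert_of_mem hi)))

theorem degY_prod_le {ι : Type*} (t : Finset ι) (f : ι → Polynomial (Polynomial K)) :
    degY (∏ i ∈ t, f i) ≤ ∑ i ∈ t, degY (f i) := by
  classical
  induction t using Finset.induction_on with
  | empty => simp [degY_one]
  | @insert a t' hni ih =>
    rw [Finset.prod_insert hni, Finset.sum_insert hni]
    exact (degY_mul_le _ _).trans (add_le_add le_rfl ih)

theorem degY_pow_le (p : Polynomial (Polynomial K)) (k : ℕ) :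
    degY (p ^ k) ≤ k * degY p := by
  induction k with
  | zero => simp [degY_one]
  | succ n ih =>
    rw [pow_succ]
    refine (degY_mul_le _ _).trans ?_
    have : (n + 1) * degY p = n * degY p + degY p := by ring
    omega

theorem natDegree_smul_le' {K : Type*} [CommSemiring K] (k : K) (p : Polynomial (Polynomial K)) :
    (k • p).natDegree ≤ p.natDegree := by
  apply Polynomial.natDegree_le_iff_coeff_eq_zero.mpr
  intro m hm
  rw [Polynomial.coeff_smul, Polynomial.coeff_eq_zero_of_natDegree_lt hm, smul_zero]

/-- The `y^d`-layer of a bivariate polynomial. -/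
noncomputable def sec (d : ℕ) (p : Polynomial (Polynomial K)) : Polynomial K :=
  ∑ n ∈ p.support, Polynomial.monomial n ((p.coeff n).coeff d)

theorem coeff_sec (d : ℕ) (p : Polynomial (Polynomial K)) (n : ℕ) :
    (sec d p).coeff n = (p.coeff n).coeff d := by
  rw [sec, Polynomial.finset_sum_coeff]
  simp only [Polynomial.coeff_monomial]
  rw [Finset.sum_ite_eq' p.support n (fun m => (p.coeff m).coeff d)]
  by_cases h : n ∈ p.support
  · simp [h]
  · simp only [h, if_false]
    rw [Polynomial.notMem_support_iff.mp h]
    simp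

theorem sec_mul {p q : Polynomial (Polynomial K)} {d e : ℕ}
    (hp : degY p ≤ d) (hq : degY q ≤ e) :
    sec (d + e) (p * q) = sec d p * sec e q := by
  ext n
  rw [coeff_sec, Polynomial.coeff_mul, Polynomial.coeff_mul, Polynomial.finset_sum_coeff]
  refine Finset.sum_congr rfl fun x _ => ?_
  rw [coeff_sec, coeff_sec, Polynomial.coeff_mul]
  refine Finset.sum_eq_single_of_mem (d, e) (Finset.HasAntidiagonal.mem_antidiagonal.mpr rfl) ?_
  rintro ⟨u, v⟩ huv hne
  have huv' : u + v = d + e := Finset.HasAntidiagonal.mem_antidiagonal.mp huv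
  rcases lt_or_ge d u with hu | hu
  · rw [Polynomial.coeff_eq_zero_of_natDegree_lt
      (lt_of_le_of_lt ((degY_coeff_le p x.1).trans hp) hu), zero_mul]
  · have hv : e < v := by
      rcases lt_or_ge u d with h1 | h1
      · omega
      · exfalso; exact hne (by simp at hne ⊢; omega)
    rw [Polynomial.coeff_eq_zero_of_natDegree_lt
      (lt_of_le_of_lt ((degY_coeff_le q x.2).trans hq) hv), mul_zero]

theorem sec_degY_ne_zero {p : Polynomial (Polynomial K)} (hp : p ≠ 0) :
    sec (degY p) p ≠ 0 := by
  obtain ⟨n, hn, hsup⟩ := Finset.exists_mem_eq_sup p.support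
    (Polynomial.support_nonempty.mpr hp) (fun m => (p.coeff m).natDegree)
  intro H
  have h1 : (sec (degY p) p).coeff n = 0 := by rw [H]; simp
  rw [coeff_sec] at h1
  have h2 : p.coeff n ≠ 0 := Polynomial.mem_support_iff.mp hn
  have h3 : degY p = (p.coeff n).natDegree := hsup
  rw [h3] at h1
  exact h2 (Polynomial.leadingCoeff_eq_zero.mp h1)

theorem degY_mul [IsDomain K] {p q : Polynomial (Polynomial K)} (hp : p ≠ 0) (hq : q ≠ 0) :
    degY (p * q) = degY p + degY q := by
  refine le_antisymm (degY_mul_le p q) ?_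
  have h1 : sec (degY p + degY q) (p * q) ≠ 0 := by
    rw [sec_mul le_rfl le_rfl]
    exact mul_ne_zero (sec_degY_ne_zero hp) (sec_degY_ne_zero hq)
  obtain ⟨n, hn⟩ : ∃ n, (sec (degY p + degY q) (p * q)).coeff n ≠ 0 := by
    by_contra hA
    push_neg at hA
    exact h1 (Polynomial.ext fun n => by simpa using hA n)
  rw [coeff_sec] at hn
  exact le_degY hn

theorem dvd_derivative_mul {R : Type*} [CommRing R] [IsDomain R] [UniqueFactorizationMonoid R]
    (bs : Polynomial R) (b : Polynomial R)
    (H : ∀ q : Polynomial R, Prime q → q ∣ b → q ∣ bs) :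
    b ∣ Polynomial.derivative b * bs := by
  revert H
  induction b using UniqueFactorizationMonoid.induction_on_prime with
  | h₁ => simp
  | h₂ x hx => exact fun _ => hx.dvd
  | h₃ a p ha hp IH =>
    intro H
    have hpbs : p ∣ bs := H p hp (dvd_mul_right p a)
    obtain ⟨s, hs⟩ := hpbs
    obtain ⟨t, ht⟩ := IH (fun q hq hqa => H q hq (hqa.mul_left p))
    refine ⟨Polynomial.derivative p * s + t, ?_⟩
    rw [Polynomial.derivative_mul]
    linear_combination Polynomial.derivative p * a * hs + p * ht

theorem derivative_pow_mul {R : Type*} [CommSemiring R] (p : Polynomial R) (n : ℕ) :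
    Polynomial.derivative (p ^ n) * p = (n : Polynomial R) * p ^ n * Polynomial.derivative p := by
  rcases n with _ | n
  · simp
  · rw [Polynomial.derivative_pow]
    simp only [Nat.succ_sub_one, Polynomial.C_eq_natCast]
    push_cast
    ring

/-- The sequence of numerator polynomials for iterated derivatives. -/
noncomputable def Mseq (c0 X T dX : Polynomial (Polynomial K)) :
    ℕ → Polynomial (Polynomial K)
  | 0 => c0
  | i + 1 => Polynomial.derivative (Mseq c0 X T dX i) * X
      + Mseq c0 X T dX i * (T - (i : Polynomial (Polynomial K)) * dX)

end Lemma8Aux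

open Lemma8Aux

set_option maxHeartbeats 4000000 in
theorem lemma8_part1
    {K : Type*} {E : Type*} [Field K] [CharZero K] [Field E]
    (Dx Dy : E → E)
    (hDxadd : ∀ u v : E, Dx (u + v) = Dx u + Dx v)
    (hDxmul : ∀ u v : E, Dx (u * v) = Dx u * v + u * Dx v)
    (hDyadd : ∀ u v : E, Dy (u + v) = Dy u + Dy v)
    (hDymul : ∀ u v : E, Dy (u * v) = Dy u * v + u * Dy v)
    (hcomm : ∀ u : E, Dx (Dy u) = Dy (Dx u))
    (ι : Polynomial (Polynomial K) →+* E)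
    (hinj : Function.Injective ι)
    (hDxι : ∀ q : Polynomial (Polynomial K), Dx (ι q) = ι (Polynomial.derivative q))
    (hDyι : ∀ q : Polynomial (Polynomial K), Dy (ι q) = ι (DY q))
    (L : ℕ) (a b c0 bs : Polynomial (Polynomial K))
    (c : Fin L → Polynomial (Polynomial K)) (e : Fin L → K)
    (ha : a ≠ 0) (hb : b ≠ 0) (hc0 : c0 ≠ 0) (hc : ∀ ℓ, c ℓ ≠ 0)
    (hbs : Squarefree bs)
    (hbsb : ∀ q : Polynomial (Polynomial K), Prime q → (q ∣ bs ↔ q ∣ b))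
    (h : E) (hh : h ≠ 0)
    (hDxh : Dx h * ι (c0 * b ^ 2 * (∏ ℓ, c ℓ))
      = h * ι (Polynomial.derivative c0 * b ^ 2 * (∏ ℓ, c ℓ)
          + (Polynomial.derivative a * b - a * Polynomial.derivative b) * c0 * (∏ ℓ, c ℓ)
          + c0 * b ^ 2 * ∑ ℓ, e ℓ • (Polynomial.derivative (c ℓ) * ∏ j ∈ Finset.univ.erase ℓ, c j)))
    (hDyh : Dy h * ι (c0 * b ^ 2 * (∏ ℓ, c ℓ))
      = h * ι (DY c0 * b ^ 2 * (∏ ℓ, c ℓ)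
          + (DY a * b - a * DY b) * c0 * (∏ ℓ, c ℓ)
          + c0 * b ^ 2 * ∑ ℓ, e ℓ • (DY (c ℓ) * ∏ j ∈ Finset.univ.erase ℓ, c j)))
    (hdeg : b.natDegree < a.natDegree)
    (r i : ℕ) (hir : i ≤ r) :
    ∃ N : Polynomial (Polynomial K),
      (Dx^[i] h) * ι (c0 * (b * bs * ∏ ℓ, c ℓ) ^ (r)) = ι N * h ∧
      (N.natDegree : ℤ)
        = (c0.natDegree : ℤ) + (r : ℤ) * ((bs.natDegree : ℤ) + (b.natDegree : ℤ) + ∑ ℓ, ((c ℓ).natDegree : ℤ)) + (i : ℤ) * ((a.natDegree : ℤ) - (b.natDegree : ℤ) - 1) ∧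
      degY N ≤ degY c0 + r * (degY bs + max (degY a) (degY b) + ∑ ℓ, degY (c ℓ)) ∧
      N.leadingCoeff
        = Polynomial.C ((((a.natDegree : ℤ) - (b.natDegree : ℤ) : ℤ) : K) ^ i)
          * (c0.leadingCoeff * a.leadingCoeff ^ i * b.leadingCoeff ^ (r - i)
            * bs.leadingCoeff ^ r * (∏ ℓ, c ℓ).leadingCoeff ^ r) := by
  classical
  obtain ⟨j, rfl⟩ : ∃ j, r = i + j := ⟨r - i, by omega⟩
  set Pm := ∏ ℓ, c ℓ with hPm
  set s := ∑ ℓ, e ℓ • (Polynomial.derivative (c ℓ) * ∏ j ∈ Finset.univ.erase ℓ, c j) with hsdef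
  have hPm0 : Pm ≠ 0 := by
    rw [hPm]; exact Finset.prod_ne_zero_iff.mpr fun ℓ _ => hc ℓ
  have hbs0 : bs ≠ 0 := hbs.ne_zero
  have hX0 : b * bs * Pm ≠ 0 := mul_ne_zero (mul_ne_zero hb hbs0) hPm0
  have hι0 : ∀ p : Polynomial (Polynomial K), p ≠ 0 → ι p ≠ 0 := by
    intro p hp hcon
    exact hp (hinj (by rw [hcon, map_zero]))
  obtain ⟨w, hw⟩ : b ∣ Polynomial.derivative b * bs :=
    Lemma8Aux.dvd_derivative_mul bs b (fun q hq hqb => (hbsb q hq).mpr hqb)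
  set M := Lemma8Aux.Mseq c0 (b * bs * Pm)
      ((Polynomial.derivative a * bs - a * w) * Pm + b * bs * s)
      (Polynomial.derivative (b * bs * Pm)) with hM
  have hM0 : M 0 = c0 := by rw [hM]; rfl
  have hMsucc : ∀ n : ℕ, M (n + 1) = Polynomial.derivative (M n) * (b * bs * Pm)
      + M n * (((Polynomial.derivative a * bs - a * w) * Pm + b * bs * s)
        - (n : Polynomial (Polynomial K)) * Polynomial.derivative (b * bs * Pm)) := by
    intro n; rw [hM]; rfl
  -- the main differential identity
  have main : ∀ k : ℕ, (Dx^[k] h) * ι (c0 * (b * bs * Pm) ^ k) = ι (M k) * h := by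
    intro k
    induction k with
    | zero => rw [Function.iterate_zero_apply, pow_zero, mul_one, hM0, mul_comm]
    | succ m IH =>
      have e2 : Dx (Dx^[m] h) * ι (c0 * (b * bs * Pm) ^ m)
          + (Dx^[m] h) * ι (Polynomial.derivative (c0 * (b * bs * Pm) ^ m))
          = ι (Polynomial.derivative (M m)) * h + ι (M m) * Dx h := by
        have h0 := congrArg Dx IH
        rwa [hDxmul, hDxmul, hDxι, hDxι] at h0
      have hqE := congrArg ι (Lemma8Aux.derivative_pow_mul (b * bs * Pm) m)
      have hwE := congrArg ι hw
      rw [Function.iterate_succ_apply']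
      have hZ : ι (c0 * (b * bs * Pm) ^ m * (c0 * (b * bs * Pm) ^ m * (c0 * b ^ 2 * Pm))) ≠ 0 := by
        apply hι0
        exact mul_ne_zero (mul_ne_zero hc0 (pow_ne_zero _ hX0))
          (mul_ne_zero (mul_ne_zero hc0 (pow_ne_zero _ hX0))
            (mul_ne_zero (mul_ne_zero hc0 (pow_ne_zero 2 hb)) hPm0))
      refine mul_right_cancel₀ hZ ?_
      rw [hMsucc m, pow_succ]
      simp only [map_mul, map_add, map_sub, map_pow, map_natCast,
        Polynomial.derivative_mul] at e2 hqE hwE hDxh IH ⊢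
      linear_combination
        (ι c0 ^ 3 * ι b ^ 2 * ι Pm * ((ι b * ι bs * ι Pm) ^ m) ^ 2
          * (ι b * ι bs * ι Pm)) * e2
        + (ι (M m) * ι c0 ^ 2 * ((ι b * ι bs * ι Pm) ^ m) ^ 2 * (ι b * ι bs * ι Pm)) * hDxh
        - ((ι (Polynomial.derivative c0) * (ι b * ι bs * ι Pm) ^ m
            + ι c0 * ι (Polynomial.derivative ((b * bs * Pm) ^ m)))
            * ι c0 ^ 2 * ι b ^ 2 * ι Pm * (ι b * ι bs * ι Pm) ^ m * (ι b * ι bs * ι Pm)) * IH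
        - (h * ι (M m) * ι c0 ^ 3 * ((ι b * ι bs * ι Pm) ^ m) ^ 2 * ι b * ι Pm ^ 2 * ι a) * hwE
        - (h * ι (M m) * ι c0 ^ 3 * (ι b * ι bs * ι Pm) ^ m * ι b ^ 2 * ι Pm) * hqE
  -- abbreviations for degrees
  have hda1 : 1 ≤ a.natDegree := by omega
  set TT := (Polynomial.derivative a * bs - a * w) * Pm + b * bs * s with hTT
  set dT : ℕ := a.natDegree - 1 + bs.natDegree + Pm.natDegree with hdT
  set vT : Polynomial K := Polynomial.C ((a.natDegree : K) - (b.natDegree : K)) *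
      (a.leadingCoeff * (bs.leadingCoeff * Pm.leadingCoeff)) with hvT
  have hdm : Pm.natDegree = ∑ ℓ, (c ℓ).natDegree := by
    rw [hPm]; exact Polynomial.natDegree_prod _ _ fun ℓ _ => hc ℓ
  have hndX : (b * bs * Pm).natDegree = b.natDegree + bs.natDegree + Pm.natDegree := by
    rw [Polynomial.natDegree_mul (mul_ne_zero hb hbs0) hPm0, Polynomial.natDegree_mul hb hbs0]
  -- coefficient of the derivative at natDegree - 1
  have hder : ∀ p : Polynomial (Polynomial K), 1 ≤ p.natDegree →
      (Polynomial.derivative p).coeff (p.natDegree - 1)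
        = p.leadingCoeff * (p.natDegree : Polynomial K) := by
    intro p hp
    rw [Polynomial.coeff_derivative]
    have h1 : p.natDegree - 1 + 1 = p.natDegree := by omega
    rw [h1, Polynomial.coeff_natDegree]
    congr 1
    push_cast [Nat.cast_sub hp]
    ring
  -- facts about U = a' bs - a w
  have hnda' : (Polynomial.derivative a).natDegree ≤ a.natDegree - 1 :=
    Polynomial.natDegree_derivative_le a
  have hU1 : (Polynomial.derivative a * bs).coeff (a.natDegree - 1 + bs.natDegree)
      = a.leadingCoeff * (a.natDegree : Polynomial K) * bs.leadingCoeff := by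
    rw [Polynomial.coeff_mul_add_eq_of_natDegree_le hnda' le_rfl, hder a hda1,
      Polynomial.coeff_natDegree]
  have hUfacts : (Polynomial.derivative a * bs - a * w).natDegree ≤ a.natDegree - 1 + bs.natDegree
      ∧ (Polynomial.derivative a * bs - a * w).coeff (a.natDegree - 1 + bs.natDegree)
        = Polynomial.C ((a.natDegree : K) - (b.natDegree : K))
          * (a.leadingCoeff * bs.leadingCoeff) := by
    rcases Nat.eq_zero_or_pos b.natDegree with hdb0 | hdb1
    · have hb' : Polynomial.derivative b = 0 := by
        obtain ⟨x, hx⟩ := Polynomial.natDegree_eq_zero.mp hdb0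
        rw [← hx, Polynomial.derivative_C]
      have hw0 : w = 0 := by
        have h2 : b * w = 0 := by rw [← hw, hb', zero_mul]
        exact (mul_eq_zero.mp h2).resolve_left hb
      rw [hw0, mul_zero, sub_zero]
      constructor
      · exact Polynomial.natDegree_mul_le.trans (add_le_add hnda' le_rfl)
      · rw [hU1, hdb0]
        simp only [Nat.cast_zero, sub_zero, Polynomial.C_eq_natCast]
        ring
    · have hb'0 : Polynomial.derivative b ≠ 0 := by
        intro h0
        have := Polynomial.natDegree_eq_zero_of_derivative_eq_zero h0
        omega
      have hw0 : w ≠ 0 := by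
        intro h0
        rw [h0, mul_zero] at hw
        exact hb'0 ((mul_eq_zero.mp hw).resolve_right hbs0)
      have hcb' := hder b hdb1
      have hndb' : (Polynomial.derivative b).natDegree = b.natDegree - 1 := by
        refine le_antisymm (Polynomial.natDegree_derivative_le b)
          (Polynomial.le_natDegree_of_ne_zero ?_)
        rw [hcb']
        exact mul_ne_zero (Polynomial.leadingCoeff_ne_zero.mpr hb)
          (Nat.cast_ne_zero.mpr (by omega))
      have hlcb' : (Polynomial.derivative b).leadingCoeff
          = b.leadingCoeff * (b.natDegree : Polynomial K) := by
        rw [Polynomial.leadingCoeff, hndb', hcb']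
      have hdegw : bs.natDegree = w.natDegree + 1 := by
        have h3 := congrArg Polynomial.natDegree hw
        rw [Polynomial.natDegree_mul hb'0 hbs0, Polynomial.natDegree_mul hb hw0, hndb'] at h3
        omega
      have hlcw : w.leadingCoeff = (b.natDegree : Polynomial K) * bs.leadingCoeff := by
        have h4 := congrArg Polynomial.leadingCoeff hw
        rw [Polynomial.leadingCoeff_mul, Polynomial.leadingCoeff_mul, hlcb'] at h4
        apply mul_left_cancel₀ (Polynomial.leadingCoeff_ne_zero.mpr hb)
        rw [← h4]
        ring
      have hU2 : (a * w).coeff (a.natDegree - 1 + bs.natDegree)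
          = a.leadingCoeff * ((b.natDegree : Polynomial K) * bs.leadingCoeff) := by
        have h5 : a.natDegree - 1 + bs.natDegree = a.natDegree + w.natDegree := by omega
        rw [h5, Polynomial.coeff_mul_degree_add_degree, hlcw]
      constructor
      · refine (Polynomial.natDegree_sub_le _ _).trans (max_le
          (Polynomial.natDegree_mul_le.trans (add_le_add hnda' le_rfl)) ?_)
        exact Polynomial.natDegree_mul_le.trans (by omega)
      · rw [Polynomial.coeff_sub, hU1, hU2, Polynomial.C_sub, Polynomial.C_eq_natCast,
          Polynomial.C_eq_natCast]
        ring
  obtain ⟨hUdeg, hUco⟩ := hUfacts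
  -- the second summand of TT has low degree
  have hbbs : b * bs * s = 0 ∨ (b * bs * s).natDegree < dT := by
    by_cases hs0 : s = 0
    · left; rw [hs0, mul_zero]
    · right
      have hnd1c : ∀ ℓ : Fin L, Polynomial.derivative (c ℓ) ≠ 0 → 1 ≤ (c ℓ).natDegree := by
        intro ℓ hdc
        by_contra h2
        push_neg at h2
        have h2' : (c ℓ).natDegree = 0 := by omega
        obtain ⟨x, hx⟩ := Polynomial.natDegree_eq_zero.mp h2'
        exact hdc (by rw [← hx, Polynomial.derivative_C])
      have hdm1 : 1 ≤ Pm.natDegree := by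
        obtain ⟨ℓ, -, hne⟩ : ∃ ℓ ∈ Finset.univ, e ℓ •
            (Polynomial.derivative (c ℓ) * ∏ j ∈ Finset.univ.erase ℓ, c j) ≠ 0 := by
          by_contra hA
          push_neg at hA
          exact hs0 (by rw [hsdef]; exact Finset.sum_eq_zero hA)
        have hdc : Polynomial.derivative (c ℓ) ≠ 0 := by
          intro h0; exact hne (by rw [h0, zero_mul, smul_zero])
        calc 1 ≤ (c ℓ).natDegree := hnd1c ℓ hdc
          _ ≤ ∑ ℓ', (c ℓ').natDegree :=
            Finset.single_le_sum (f := fun ℓ' => (c ℓ').natDegree)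
              (fun _ _ => Nat.zero_le _) (Finset.mem_univ ℓ)
          _ = Pm.natDegree := hdm.symm
      have hsnd : s.natDegree ≤ Pm.natDegree - 1 := by
        rw [hsdef]
        apply Polynomial.natDegree_sum_le_of_forall_le
        intro ℓ _
        by_cases hdc : Polynomial.derivative (c ℓ) = 0
        · rw [hdc, zero_mul, smul_zero, Polynomial.natDegree_zero]
          exact Nat.zero_le _
        · refine (natDegree_smul_le' _ _).trans
            (Polynomial.natDegree_mul_le.trans ?_)
          have h6 : (∏ j ∈ Finset.univ.erase ℓ, c j).natDegree
              = ∑ j ∈ Finset.univ.erase ℓ, (c j).natDegree :=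
            Polynomial.natDegree_prod _ _ fun j _ => hc j
          have h7 : (c ℓ).natDegree + ∑ j ∈ Finset.univ.erase ℓ, (c j).natDegree
              = ∑ ℓ', (c ℓ').natDegree :=
            Finset.add_sum_erase _ (fun j => (c j).natDegree) (Finset.mem_univ ℓ)
          have h8 := Polynomial.natDegree_derivative_le (c ℓ)
          have h9 := hnd1c ℓ hdc
          rw [h6]
          omega
      have h10 : (b * bs * s).natDegree ≤ b.natDegree + bs.natDegree + s.natDegree :=
        Polynomial.natDegree_mul_le.trans (add_le_add Polynomial.natDegree_mul_le le_rfl)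
      rw [hdT]
      omega
  -- facts about TT
  have hTco : TT.coeff dT = vT := by
    rw [hTT, Polynomial.coeff_add, hdT]
    have h11 : ((Polynomial.derivative a * bs - a * w) * Pm).coeff
        (a.natDegree - 1 + bs.natDegree + Pm.natDegree)
        = Polynomial.C ((a.natDegree : K) - (b.natDegree : K))
          * (a.leadingCoeff * bs.leadingCoeff) * Pm.leadingCoeff := by
      rw [Polynomial.coeff_mul_add_eq_of_natDegree_le hUdeg le_rfl, hUco, Polynomial.coeff_natDegree]
    have h12 : (b * bs * s).coeff (a.natDegree - 1 + bs.natDegree + Pm.natDegree) = 0 := by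
      rcases hbbs with h0 | h1
      · rw [h0, Polynomial.coeff_zero]
      · exact Polynomial.coeff_eq_zero_of_natDegree_lt (by rw [hdT] at h1; exact h1)
    rw [h11, h12, add_zero, hvT]
    ring
  have hTdeg : TT.natDegree ≤ dT := by
    rw [hTT]
    refine (Polynomial.natDegree_add_le _ _).trans (max_le ?_ ?_)
    · rw [hdT]
      exact Polynomial.natDegree_mul_le.trans (add_le_add hUdeg le_rfl)
    · rcases hbbs with h0 | h1
      · rw [h0, Polynomial.natDegree_zero]; exact Nat.zero_le _
      · exact h1.le
  have hvT0 : vT ≠ 0 := by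
    rw [hvT]
    refine mul_ne_zero (Polynomial.C_ne_zero.mpr (sub_ne_zero.mpr ?_))
      (mul_ne_zero (Polynomial.leadingCoeff_ne_zero.mpr ha)
        (mul_ne_zero (Polynomial.leadingCoeff_ne_zero.mpr hbs0)
          (Polynomial.leadingCoeff_ne_zero.mpr hPm0)))
    intro hEq
    exact absurd (Nat.cast_injective hEq) (by omega)
  have hTnd : TT.natDegree = dT :=
    le_antisymm hTdeg (Polynomial.le_natDegree_of_ne_zero (by rw [hTco]; exact hvT0))
  have hTlc : TT.leadingCoeff = vT := by rw [Polynomial.leadingCoeff, hTnd, hTco]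
  -- facts about the scaled derivative of X
  have hdXz : Polynomial.derivative (b * bs * Pm) = 0
      ∨ (Polynomial.derivative (b * bs * Pm)).natDegree < dT := by
    rcases Nat.eq_zero_or_pos (b * bs * Pm).natDegree with h0 | h1
    · left
      obtain ⟨x, hx⟩ := Polynomial.natDegree_eq_zero.mp h0
      rw [← hx, Polynomial.derivative_C]
    · right
      have h2 := Polynomial.natDegree_derivative_le (b * bs * Pm)
      rw [hdT]
      omega
  have hkdX : ∀ k : ℕ, ((k : Polynomial (Polynomial K))
        * Polynomial.derivative (b * bs * Pm)).coeff dT = 0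
      ∧ ((k : Polynomial (Polynomial K))
        * Polynomial.derivative (b * bs * Pm)).natDegree ≤ dT := by
    intro k
    rcases hdXz with h0 | h1
    · rw [h0, mul_zero]
      simp
    · constructor
      · apply Polynomial.coeff_eq_zero_of_natDegree_lt
        refine Polynomial.natDegree_mul_le.trans_lt ?_
        rw [Polynomial.natDegree_natCast]
        omega
      · refine Polynomial.natDegree_mul_le.trans ?_
        rw [Polynomial.natDegree_natCast]
        omega
  -- degree and leading coefficient of M k
  have hMfacts : ∀ k : ℕ, (M k).natDegree = c0.natDegree + k * dT
      ∧ (M k).leadingCoeff = c0.leadingCoeff * vT ^ k := by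
    intro k
    induction k with
    | zero => rw [hM0]; simp
    | succ n IHn =>
      obtain ⟨IH1, IH2⟩ := IHn
      have hMne : M n ≠ 0 := by
        intro h0
        apply mul_ne_zero (Polynomial.leadingCoeff_ne_zero.mpr hc0) (pow_ne_zero n hvT0)
        rw [← IH2, h0, Polynomial.leadingCoeff_zero]
      have hTk1 : (TT - (n : Polynomial (Polynomial K))
          * Polynomial.derivative (b * bs * Pm)).natDegree ≤ dT :=
        (Polynomial.natDegree_sub_le _ _).trans (max_le hTdeg (hkdX n).2)
      have hTk2 : (TT - (n : Polynomial (Polynomial K))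
          * Polynomial.derivative (b * bs * Pm)).coeff dT = vT := by
        rw [Polynomial.coeff_sub, hTco, (hkdX n).1, sub_zero]
      have c1 : Polynomial.derivative (M n) * (b * bs * Pm) = 0
          ∨ (Polynomial.derivative (M n) * (b * bs * Pm)).natDegree
            < c0.natDegree + n * dT + dT := by
        by_cases hd0 : Polynomial.derivative (M n) = 0
        · left; rw [hd0, zero_mul]
        · right
          have h9 : (M n).natDegree ≠ 0 := by
            intro h0
            obtain ⟨x, hx⟩ := Polynomial.natDegree_eq_zero.mp h0
            exact hd0 (by rw [← hx, Polynomial.derivative_C])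
          have h10 := Polynomial.natDegree_derivative_le (M n)
          refine Polynomial.natDegree_mul_le.trans_lt ?_
          rw [hndX, hdT]
          rw [hdT] at IH1
          omega
      have hnd1 : (M (n + 1)).natDegree ≤ c0.natDegree + n * dT + dT := by
        rw [hMsucc n]
        refine (Polynomial.natDegree_add_le _ _).trans (max_le ?_ ?_)
        · rcases c1 with h0 | h1
          · rw [h0, Polynomial.natDegree_zero]; exact Nat.zero_le _
          · exact h1.le
        · exact Polynomial.natDegree_mul_le.trans (by omega)
      have hco1 : (M (n + 1)).coeff (c0.natDegree + n * dT + dT)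
          = c0.leadingCoeff * vT ^ n * vT := by
        rw [hMsucc n, Polynomial.coeff_add]
        have h11 : (Polynomial.derivative (M n) * (b * bs * Pm)).coeff
            (c0.natDegree + n * dT + dT) = 0 := by
          rcases c1 with h0 | h1
          · rw [h0, Polynomial.coeff_zero]
          · exact Polynomial.coeff_eq_zero_of_natDegree_lt h1
        rw [h11, zero_add]
        have h12 : c0.natDegree + n * dT + dT = (M n).natDegree + dT := by omega
        rw [h12, Polynomial.coeff_mul_add_eq_of_natDegree_le le_rfl hTk1,
          Polynomial.coeff_natDegree, IH2, hTk2]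
      have hne2 : c0.leadingCoeff * vT ^ n * vT ≠ 0 :=
        mul_ne_zero (mul_ne_zero (Polynomial.leadingCoeff_ne_zero.mpr hc0)
          (pow_ne_zero n hvT0)) hvT0
      have hndeq : (M (n + 1)).natDegree = c0.natDegree + n * dT + dT :=
        le_antisymm hnd1 (Polynomial.le_natDegree_of_ne_zero (by rw [hco1]; exact hne2))
      constructor
      · rw [hndeq]; ring
      · rw [Polynomial.leadingCoeff, hndeq, hco1, pow_succ]; ring
  have hMne : ∀ k, M k ≠ 0 := by
    intro k h0
    apply mul_ne_zero (Polynomial.leadingCoeff_ne_zero.mpr hc0) (pow_ne_zero k hvT0)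
    rw [← (hMfacts k).2, h0, Polynomial.leadingCoeff_zero]
  -- y-degree bounds
  have gPm : degY Pm ≤ ∑ ℓ, degY (c ℓ) := by
    rw [hPm]; exact degY_prod_le _ _
  have gX : degY (b * bs * Pm) ≤ degY bs + max (degY a) (degY b) + ∑ ℓ, degY (c ℓ) := by
    have h1 := degY_mul_le (b * bs) Pm
    have h2 := degY_mul_le b bs
    have h3 : degY b ≤ max (degY a) (degY b) := le_max_right _ _
    omega
  have gw : degY w ≤ degY bs := by
    by_cases hw0 : w = 0
    · rw [hw0, degY_zero]; exact Nat.zero_le _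
    · have hb'0 : Polynomial.derivative b ≠ 0 := by
        intro h0
        rw [h0, zero_mul] at hw
        exact hw0 ((mul_eq_zero.mp hw.symm).resolve_left hb)
      have h1 := congrArg degY hw
      rw [degY_mul hb'0 hbs0, degY_mul hb hw0] at h1
      have h2 := degY_derivative_le b
      omega
  have gT : ∀ k : ℕ, degY (TT - (k : Polynomial (Polynomial K))
        * Polynomial.derivative (b * bs * Pm))
      ≤ degY bs + max (degY a) (degY b) + ∑ ℓ, degY (c ℓ) := by
    intro k
    refine (degY_sub_le _ _).trans (max_le ?_ ?_)
    · rw [hTT]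
      refine (degY_add_le _ _).trans (max_le ?_ ?_)
      · refine (degY_mul_le _ _).trans ?_
        have h1 : degY (Polynomial.derivative a * bs - a * w) ≤ degY a + degY bs := by
          refine (degY_sub_le _ _).trans (max_le ?_ ?_)
          · exact (degY_mul_le _ _).trans (add_le_add (degY_derivative_le a) le_rfl)
          · exact (degY_mul_le _ _).trans (add_le_add le_rfl gw)
        have h2 : degY a ≤ max (degY a) (degY b) := le_max_left _ _
        omega
      · have h3 : degY s ≤ ∑ ℓ, degY (c ℓ) := by
          rw [hsdef]
          refine degY_sum_le _ _ ?_
          intro ℓ _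
          refine (degY_smul_le _ _).trans ((degY_mul_le _ _).trans ?_)
          have h4 : degY (∏ j ∈ Finset.univ.erase ℓ, c j)
              ≤ ∑ j ∈ Finset.univ.erase ℓ, degY (c j) := degY_prod_le _ _
          have h5 : degY (c ℓ) + ∑ j ∈ Finset.univ.erase ℓ, degY (c j)
              = ∑ ℓ', degY (c ℓ') :=
            Finset.add_sum_erase _ (fun j => degY (c j)) (Finset.mem_univ ℓ)
          have h6 := degY_derivative_le (c ℓ)
          omega
        have h7 := degY_mul_le (b * bs) s
        have h8 := degY_mul_le b bs
        have h9 : degY b ≤ max (degY a) (degY b) := le_max_right _ _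
        omega
    · refine (degY_mul_le _ _).trans ?_
      rw [degY_natCast]
      have := (degY_derivative_le (b * bs * Pm)).trans gX
      omega
  have hMdY : ∀ k : ℕ, degY (M k)
      ≤ degY c0 + k * (degY bs + max (degY a) (degY b) + ∑ ℓ, degY (c ℓ)) := by
    intro k
    induction k with
    | zero => rw [hM0]; simp
    | succ n IHn =>
      rw [hMsucc n]
      refine (degY_add_le _ _).trans (max_le ?_ ?_)
      · calc degY (Polynomial.derivative (M n) * (b * bs * Pm))
            ≤ degY (Polynomial.derivative (M n)) + degY (b * bs * Pm) := degY_mul_le _ _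
          _ ≤ (degY c0 + n * (degY bs + max (degY a) (degY b) + ∑ ℓ, degY (c ℓ)))
              + (degY bs + max (degY a) (degY b) + ∑ ℓ, degY (c ℓ)) :=
            add_le_add ((degY_derivative_le _).trans IHn) gX
          _ = degY c0 + (n + 1) * (degY bs + max (degY a) (degY b) + ∑ ℓ, degY (c ℓ)) := by
            ring
      · calc degY (M n * (TT - (n : Polynomial (Polynomial K))
              * Polynomial.derivative (b * bs * Pm)))
            ≤ degY (M n) + degY (TT - (n : Polynomial (Polynomial K))
              * Polynomial.derivative (b * bs * Pm)) := degY_mul_le _ _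
          _ ≤ (degY c0 + n * (degY bs + max (degY a) (degY b) + ∑ ℓ, degY (c ℓ)))
              + (degY bs + max (degY a) (degY b) + ∑ ℓ, degY (c ℓ)) :=
            add_le_add IHn (gT n)
          _ = degY c0 + (n + 1) * (degY bs + max (degY a) (degY b) + ∑ ℓ, degY (c ℓ)) := by
            ring
  -- assemble
  refine ⟨M i * (b * bs * Pm) ^ j, ?_, ?_, ?_, ?_⟩
  · have hmi := main i
    rw [pow_add, ← mul_assoc]
    simp only [map_mul] at hmi ⊢
    linear_combination ι ((b * bs * Pm) ^ j) * hmi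
  · rw [Polynomial.natDegree_mul (hMne i) (pow_ne_zero _ hX0), Polynomial.natDegree_pow,
      (hMfacts i).1, hndX, hdT, hdm]
    push_cast [Nat.cast_sub hda1]
    ring
  · calc degY (M i * (b * bs * Pm) ^ j)
        ≤ degY (M i) + degY ((b * bs * Pm) ^ j) := degY_mul_le _ _
      _ ≤ (degY c0 + i * (degY bs + max (degY a) (degY b) + ∑ ℓ, degY (c ℓ)))
          + j * (degY bs + max (degY a) (degY b) + ∑ ℓ, degY (c ℓ)) :=
        add_le_add (hMdY i) ((degY_pow_le _ _).trans (Nat.mul_le_mul_left j gX))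
      _ = degY c0 + (i + j) * (degY bs + max (degY a) (degY b) + ∑ ℓ, degY (c ℓ)) := by
        ring
  · rw [Polynomial.leadingCoeff_mul, Polynomial.leadingCoeff_pow,
      Polynomial.leadingCoeff_mul, Polynomial.leadingCoeff_mul, (hMfacts i).2, hvT]
    simp only [Nat.add_sub_cancel_left]
    have hcast : ((((a.natDegree : ℤ) - (b.natDegree : ℤ) : ℤ)) : K)
        = (a.natDegree : K) - (b.natDegree : K) := by push_cast; ring
    rw [hcast, map_pow]
    ring
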